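/- Let F be an algebraically closed field of characteristic p > 0, let M be a function field over F, and let t ∈ M be transcendental over F and not a p-th power in M (so M/F(t) is separable). Let D : M → M be an F-linear derivation of M with D(t) = 1 (the derivation with respect to t). Let v be a prime of M that is unramified over F(t) and satisfies v(t) ≥ 0. Then for every x ∈ M with v(x) ≥ 0 and D(x) ≠ 0, one has v(D(x)) ≥ max(0, v(x) − 1). -/

import Mathlib

set_option maxHeartbeats 1000000
set_option synthInstance.maxHeartbeats 1000000


/-- A prime of a function field `M` over a constant field `F`: a surjective additive
valuation `M → ℤ` that is trivial on `F`. -/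
structure FFPrime (F M : Type*) [Field F] [Field M] [Algebra F M] where
  v : M → ℤ
  map_mul : ∀ x y : M, x ≠ 0 → y ≠ 0 → v (x * y) = v x + v y
  add_min : ∀ x y : M, x ≠ 0 → y ≠ 0 → x + y ≠ 0 → min (v x) (v y) ≤ v (x + y)
  surj : ∀ n : ℤ, ∃ x : M, x ≠ 0 ∧ v x = n
  triv : ∀ c : F, c ≠ 0 → v (algebraMap F M c) = 0

/-- A prime of `M` is unramified over `F(t)` if some nonzero element of `F(t)` has
valuation `1`. -/
def FFPrime.UnramifiedOver {F M : Type*} [Field F] [Field M] [Algebra F M]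
    (P : FFPrime F M) (t : M) : Prop :=
  ∃ r : M, r ∈ IntermediateField.adjoin F {t} ∧ r ≠ 0 ∧ P.v r = 1


namespace FFPrime
variable {F M : Type*} [Field F] [Field M] [Algebra F M] (P : FFPrime F M)

lemma v_one : P.v 1 = 0 := by
  have := P.map_mul 1 1 one_ne_zero one_ne_zero
  simp at this; linarith

lemma v_inv {x : M} (hx : x ≠ 0) : P.v x⁻¹ = - P.v x := by
  have := P.map_mul x x⁻¹ hx (inv_ne_zero hx)
  rw [mul_inv_cancel₀ hx, P.v_one] at this
  linarith

lemma v_pow {x : M} (hx : x ≠ 0) (n : ℕ) : P.v (x ^ n) = n * P.v x := by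
  induction n with
  | zero => simpa using P.v_one
  | succ n ih =>
    rw [pow_succ, P.map_mul _ _ (pow_ne_zero n hx) hx, ih]
    push_cast; ring

lemma v_neg {x : M} (hx : x ≠ 0) : P.v (-x) = P.v x := by
  have h1 : ((-1 : M)) = algebraMap F M (-1) := by simp
  have hv1 : P.v (-1 : M) = 0 := by rw [h1]; exact P.triv (-1) (by norm_num)
  have := P.map_mul (-1) x (by norm_num) hx
  rw [neg_one_mul, hv1] at this
  linarith

lemma v_add_eq_left {x y : M} (hx : x ≠ 0) (hy : y ≠ 0) (h : P.v x < P.v y) :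
    x + y ≠ 0 ∧ P.v (x + y) = P.v x := by
  have hne : x + y ≠ 0 := by
    intro h0
    have hyx : y = -x := by linear_combination h0
    rw [hyx, P.v_neg hx] at h
    exact lt_irrefl _ h
  constructor
  · exact hne
  · have hmin := P.add_min x y hx hy hne
    have hmin' : P.v x ≤ P.v (x + y) := le_trans (by simp [min_le_left]; omega) hmin
    refine le_antisymm ?_ hmin'
    have hx' : x = (x + y) + (-y) := by ring
    have hny : (x + y) + (-y) ≠ 0 := by rw [← hx']; exact hx
    have h2 := P.add_min (x + y) (-y) hne (neg_ne_zero.2 hy) hny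
    rw [← hx', P.v_neg hy] at h2
    omega

lemma v_sum {ι : Type*} [DecidableEq ι] (s : Finset ι) : ∀ (f : ι → M),
    (∀ i ∈ s, f i ≠ 0) →
    (∀ i ∈ s, ∀ j ∈ s, P.v (f i) = P.v (f j) → i = j) →
    s.Nonempty →
    (∑ i ∈ s, f i) ≠ 0 ∧ ∃ i0 ∈ s, P.v (∑ i ∈ s, f i) = P.v (f i0) ∧
      ∀ i ∈ s, P.v (f i0) ≤ P.v (f i) := by
  induction s using Finset.strongInduction with
  | _ s ih =>
    intro f hne hdist hs
    obtain ⟨i0, hi0, hmin⟩ := s.exists_min_image (fun i => P.v (f i)) hs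
    rcases Finset.eq_empty_or_nonempty (s.erase i0) with he | hne'
    · have hseq : s = {i0} := by
        apply Finset.eq_singleton_iff_unique_mem.2
        refine ⟨hi0, fun j hj => ?_⟩
        by_contra hj0
        exact (Finset.notMem_empty j) (he ▸ Finset.mem_erase.2 ⟨hj0, hj⟩)
      subst hseq
      simp only [Finset.sum_singleton]
      exact ⟨hne i0 hi0, i0, hi0, rfl, fun i hi => hmin i hi⟩
    · have hsub : s.erase i0 ⊂ s := Finset.erase_ssubset hi0
      obtain ⟨hne0, i1, hi1, hv1, hmin1⟩ := ih _ hsub f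
        (fun i hi => hne i (Finset.mem_of_mem_erase hi))
        (fun i hi j hj h => hdist i (Finset.mem_of_mem_erase hi) j
          (Finset.mem_of_mem_erase hj) h) hne'
      have hsum : ∑ i ∈ s, f i = f i0 + ∑ i ∈ s.erase i0, f i :=
        (Finset.add_sum_erase s f hi0).symm
      have hi1s : i1 ∈ s := Finset.mem_of_mem_erase hi1
      have hlt : P.v (f i0) < P.v (f i1) := by
        refine lt_of_le_of_ne (hmin i1 hi1s) fun h => ?_
        exact (Finset.ne_of_mem_erase hi1) (hdist i1 hi1s i0 hi0 h.symm)
      have hkey := P.v_add_eq_left (hne i0 hi0) hne0 (by rw [hv1]; exact hlt)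
      rw [← hsum] at hkey
      exact ⟨hkey.1, i0, hi0, hkey.2, fun i hi => hmin i hi⟩

lemma v_multiset_prod (s : Multiset M) (h : ∀ x ∈ s, x ≠ 0) :
    s.prod ≠ 0 ∧ P.v s.prod = (s.map P.v).sum := by
  induction s using Multiset.induction_on with
  | empty => simpa using P.v_one
  | cons a s ih =>
    have ha : a ≠ 0 := h a (Multiset.mem_cons_self a s)
    obtain ⟨h1, h2⟩ := ih (fun x hx => h x (Multiset.mem_cons_of_mem hx))
    rw [Multiset.prod_cons, Multiset.map_cons, Multiset.sum_cons]
    exact ⟨mul_ne_zero ha h1, by rw [P.map_mul a s.prod ha h1, h2]⟩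

lemma sum_map_eq_count [DecidableEq F] {s : Multiset F} {φ : F → ℤ} {b : F}
    (h : ∀ c ∈ s, c ≠ b → φ c = 0) :
    (s.map φ).sum = (s.count b : ℤ) * φ b := by
  induction s using Multiset.induction_on with
  | empty => simp
  | cons a s ih =>
    rw [Multiset.map_cons, Multiset.sum_cons, Multiset.count_cons,
      ih (fun c hc => h c (Multiset.mem_cons_of_mem hc))]
    by_cases hab : a = b
    · subst hab; simp; ring
    · rw [h a (Multiset.mem_cons_self a s) hab]
      rw [if_neg (fun hba => hab hba.symm)]
      push_cast; ring

variable [IsAlgClosed F]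

lemma v_aeval {t : M} (htrans : Transcendental F t) (f : Polynomial F) (hf : f ≠ 0) :
    Polynomial.aeval t f ≠ 0 ∧
    P.v (Polynomial.aeval t f) =
      ((f.roots).map (fun b => P.v (t - algebraMap F M b))).sum := by
  have htne : ∀ b : F, t - algebraMap F M b ≠ 0 := by
    intro b h
    rw [sub_eq_zero] at h
    exact htrans (h ▸ isAlgebraic_algebraMap b)
  have hane : Polynomial.aeval t f ≠ 0 := fun h => htrans ⟨f, hf, h⟩
  refine ⟨hane, ?_⟩
  have hsplit : f.Splits := IsAlgClosed.splits f
  have heq := Polynomial.Splits.eq_prod_roots hsplit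
  have hlc : f.leadingCoeff ≠ 0 := Polynomial.leadingCoeff_ne_zero.2 hf
  have haev : Polynomial.aeval t f =
      algebraMap F M f.leadingCoeff *
        ((f.roots).map (fun b => t - algebraMap F M b)).prod := by
    conv_lhs => rw [heq]
    rw [_root_.map_mul, map_multiset_prod]
    simp [Multiset.map_map, Function.comp]
  obtain ⟨hprodne, hprodv⟩ := P.v_multiset_prod
    ((f.roots).map (fun b => t - algebraMap F M b))
    (by intro x hx; obtain ⟨b, _, rfl⟩ := Multiset.mem_map.1 hx; exact htne b)
  have hlcM : algebraMap F M f.leadingCoeff ≠ 0 := by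
    intro h; exact hlc ((algebraMap F M).injective (h.trans (map_zero _).symm))
  rw [haev, P.map_mul _ _ hlcM hprodne, P.triv _ hlc, hprodv, Multiset.map_map, zero_add]
  rfl

lemma exists_uniformizer {t : M} (htrans : Transcendental F t)
    (hunr : ∃ r : M, r ∈ IntermediateField.adjoin F {t} ∧ r ≠ 0 ∧ P.v r = 1)
    (hPt : 0 ≤ P.v t) :
    ∃ a : F, P.v (t - algebraMap F M a) = 1 := by
  classical
  set φ : F → ℤ := fun b => P.v (t - algebraMap F M b) with hφ
  have htne : ∀ b : F, t - algebraMap F M b ≠ 0 := by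
    intro b h
    rw [sub_eq_zero] at h
    exact htrans (h ▸ isAlgebraic_algebraMap b)
  have ht0 : t ≠ 0 := fun h => htrans (h ▸ isAlgebraic_zero)
  have hφ0 : ∀ b : F, 0 ≤ φ b := by
    intro b
    by_cases hb : b = 0
    · subst hb; simpa [hφ] using hPt
    · have h1 : t - algebraMap F M b = t + (- algebraMap F M b) := by ring
      have h2 : P.v (- algebraMap F M b) = 0 := by
        rw [← map_neg]; exact P.triv (-b) (neg_ne_zero.2 hb)
      have hbm : - algebraMap F M b ≠ 0 := by
        simp only [neg_ne_zero]
        intro h; exact hb ((algebraMap F M).injective (h.trans (map_zero _).symm))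
      have hmin := P.add_min t (- algebraMap F M b) ht0 hbm (h1 ▸ htne b)
      have h3 : (0:ℤ) ≤ min (P.v t) (P.v (- algebraMap F M b)) :=
        le_min hPt (le_of_eq h2.symm)
      have : 0 ≤ P.v (t + -algebraMap F M b) := le_trans h3 hmin
      simpa [hφ, ← h1] using this
  obtain ⟨r, hrK, hr0, hr1⟩ := hunr
  obtain ⟨f, g, hrfg⟩ := (IntermediateField.mem_adjoin_simple_iff F r).1 hrK
  have hg : g ≠ 0 := by
    intro h; rw [h] at hrfg; simp at hrfg; exact hr0 hrfg
  have hf : f ≠ 0 := by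
    intro h; rw [h] at hrfg; simp at hrfg; exact hr0 hrfg
  obtain ⟨hft, hfv⟩ := P.v_aeval htrans f hf
  obtain ⟨hgt, hgv⟩ := P.v_aeval htrans g hg
  have hrv : ((f.roots).map φ).sum - ((g.roots).map φ).sum = 1 := by
    have hv : P.v r = P.v (Polynomial.aeval t f) + P.v ((Polynomial.aeval t g)⁻¹) := by
      rw [hrfg, div_eq_mul_inv]
      exact P.map_mul _ _ hft (inv_ne_zero hgt)
    rw [P.v_inv hgt] at hv
    rw [← hfv, ← hgv]
    omega
  have hex : ∃ b ∈ f.roots, φ b ≠ 0 := by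
    by_contra h
    push_neg at h
    have h1 : ((f.roots).map φ).sum = 0 := by
      apply Multiset.sum_eq_zero
      intro x hx
      obtain ⟨b, hb, rfl⟩ := Multiset.mem_map.1 hx
      exact h b hb
    have h2 : 0 ≤ ((g.roots).map φ).sum := by
      apply Multiset.sum_nonneg
      intro x hx
      obtain ⟨b, _, rfl⟩ := Multiset.mem_map.1 hx
      exact hφ0 b
    omega
  obtain ⟨b, hbf, hbne⟩ := hex
  have hb1 : 1 ≤ φ b := (hφ0 b).lt_of_ne (Ne.symm hbne)
  have hvanish : ∀ c, c ≠ b → φ c = 0 := by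
    intro c hc
    have hc1 : t - algebraMap F M c = algebraMap F M (b - c) + (t - algebraMap F M b) := by
      rw [map_sub]; ring
    have hbc : (b - c : F) ≠ 0 := sub_ne_zero.2 (Ne.symm hc)
    have h2 : P.v (algebraMap F M (b - c)) = 0 := P.triv _ hbc
    have hbcm : algebraMap F M (b - c) ≠ 0 := by
      intro h; exact hbc ((algebraMap F M).injective (h.trans (map_zero _).symm))
    have hkey := (P.v_add_eq_left hbcm (htne b) (by rw [h2]; exact hb1)).2
    rw [← hc1] at hkey
    show P.v (t - algebraMap F M c) = 0
    rw [hkey, h2]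
  have hSf : ((f.roots).map φ).sum = ((f.roots).count b : ℤ) * φ b :=
    sum_map_eq_count (fun c _ => hvanish c)
  have hSg : ((g.roots).map φ).sum = ((g.roots).count b : ℤ) * φ b :=
    sum_map_eq_count (fun c _ => hvanish c)
  have hmul : (((f.roots).count b : ℤ) - ((g.roots).count b : ℤ)) * φ b = 1 := by
    rw [sub_mul, ← hSf, ← hSg]; omega
  have hdvd : φ b ∣ 1 := Dvd.intro_left _ hmul
  have : φ b ≤ 1 := Int.le_of_dvd one_pos hdvd
  exact ⟨b, le_antisymm this hb1⟩

end FFPrime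

section Der
variable {F M : Type*} [Field F] [Field M] [Algebra F M]
variable {D : M → M}
  (hDadd : ∀ x y : M, D (x + y) = D x + D y)
  (hDlin : ∀ (c : F) (x : M), D (algebraMap F M c * x) = algebraMap F M c * D x)
  (hDmul : ∀ x y : M, D (x * y) = x * D y + y * D x)

include hDmul in
lemma D_one : D 1 = 0 := by
  have h := hDmul 1 1
  rw [one_mul, one_mul] at h
  linear_combination -h

include hDadd in
lemma D_zero : D 0 = 0 := by
  have h := hDadd 0 0
  rw [add_zero] at h
  linear_combination -h

include hDmul hDlin in
lemma D_const (c : F) : D (algebraMap F M c) = 0 := by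
  have h := hDlin c 1
  rw [mul_one, D_one hDmul, mul_zero] at h
  exact h

include hDmul in
lemma D_pow (x : M) (n : ℕ) : D (x ^ n) = (n : M) * x ^ (n - 1) * D x := by
  induction n with
  | zero => simp [D_one hDmul]
  | succ n ih =>
    rw [pow_succ, hDmul, ih]
    cases n with
    | zero => simp
    | succ m =>
      have h1 : (m + 1 : ℕ) - 1 = m := rfl
      have h2 : (m + 1 + 1 : ℕ) - 1 = m + 1 := rfl
      rw [h1, h2]
      push_cast
      ring

include hDadd in
lemma D_sum {ι : Type*} (s : Finset ι) (f : ι → M) :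
    D (∑ i ∈ s, f i) = ∑ i ∈ s, D (f i) := by
  classical
  induction s using Finset.induction_on with
  | empty => simpa using D_zero hDadd
  | insert _ _ hx ih =>
    rw [Finset.sum_insert hx, Finset.sum_insert hx, hDadd, ih]

end Der

open IntermediateField Polynomial

lemma dec {F M : Type*} [Field F] [Field M] [Algebra F M] [IsAlgClosed F]
    (p : ℕ) (hp : p.Prime) [CharP F p]
    (π : M) (htrans : Transcendental F π)
    (hfin : FiniteDimensional (IntermediateField.adjoin F {π}) M)
    (hnp : ¬∃ c : M, c ^ p = π) (x : M) :
    ∃ w : Fin p → M, x = ∑ i : Fin p, (w i) ^ p * π ^ (i : ℕ) := by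
  classical
  haveI : CharP M p := charP_of_injective_algebraMap (algebraMap F M).injective p
  haveI : Fact p.Prime := ⟨hp⟩
  set φ : M →+* M := frobenius M p with hφdef
  have hφeval : ∀ y : M, φ y = y ^ p := fun y => rfl
  set K : IntermediateField F M := IntermediateField.adjoin F {π} with hK
  have hπK : π ∈ K := IntermediateField.mem_adjoin_simple_self F π
  have hFk : ∀ c : F, algebraMap F M c ∈ (K.toSubfield.map φ) := by
    intro c
    obtain ⟨b, hb⟩ := IsAlgClosed.exists_pow_nat_eq c hp.pos
    refine Subfield.mem_map.2 ⟨algebraMap F M b, K.algebraMap_mem b, ?_⟩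
    rw [hφeval, ← map_pow, hb]
  set kI : IntermediateField F M := (K.toSubfield.map φ).toIntermediateField hFk with hkI
  have hkI_mem : ∀ y : M, y ∈ kI ↔ ∃ c, c ∈ K ∧ c ^ p = y := by
    intro y
    exact Subfield.mem_map
  -- π^p ∈ kI, π ∉ kI
  have hπp : π ^ p ∈ kI := (hkI_mem _).2 ⟨π, hπK, rfl⟩
  have hπn : π ∉ kI := by
    intro h
    obtain ⟨c, _, hc⟩ := (hkI_mem π).1 h
    exact hnp ⟨c, hc⟩
  -- T = kI⟮π⟯
  set T : IntermediateField ↥kI M := IntermediateField.adjoin ↥kI {π} with hT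
  set a0 : ↥kI := ⟨π ^ p, hπp⟩ with ha0
  have heval0 : Polynomial.aeval π (X ^ p - C a0 : Polynomial ↥kI) = 0 := by
    rw [map_sub, map_pow, aeval_X, aeval_C]
    have : (algebraMap ↥kI M) a0 = π ^ p := rfl
    rw [this, sub_self]
  have hInt : IsIntegral ↥kI π :=
    ⟨X ^ p - C a0, monic_X_pow_sub_C _ hp.ne_zero, by simpa using heval0⟩
  have hirr0 : Irreducible (X ^ p - C a0 : Polynomial ↥kI) := by
    apply X_pow_sub_C_irreducible_of_prime hp
    intro b hb
    apply hπn
    have hbv : (b : M) ^ p = π ^ p := by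
      have := congrArg (Subtype.val) hb
      simpa using this
    have : (b : M) = π := frobenius_inj M p hbv
    exact this ▸ b.2
  have hmin0 : minpoly ↥kI π = X ^ p - C a0 :=
    (minpoly.eq_of_irreducible_of_monic hirr0 heval0 (monic_X_pow_sub_C _ hp.ne_zero)).symm
  have hTd : Module.finrank ↥kI ↥T = p := by
    rw [hT, IntermediateField.adjoin.finrank hInt, hmin0, natDegree_X_pow_sub_C]
  -- T and K have the same elements
  have hKT : ∀ y, y ∈ K → y ∈ T := by
    have hF : ∀ c : F, algebraMap F M c ∈ T.toSubfield := by
      intro c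
      exact T.algebraMap_mem ⟨algebraMap F M c, hFk c⟩
    have hπT : π ∈ T.toSubfield.toIntermediateField hF :=
      IntermediateField.mem_adjoin_simple_self (↥kI) π
    have hle : K ≤ T.toSubfield.toIntermediateField hF := by
      rw [hK]
      apply IntermediateField.adjoin_le_iff.2
      exact Set.singleton_subset_iff.2 hπT
    exact fun y hy => hle hy
  have hTK : ∀ y, y ∈ T → y ∈ K := by
    have hkiK : ∀ c : ↥kI, algebraMap ↥kI M c ∈ K.toSubfield := by
      intro c
      obtain ⟨e, heK, hec⟩ := (hkI_mem (c : M)).1 c.2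
      have h1 : algebraMap ↥kI M c = (c : M) := rfl
      rw [h1, ← hec]
      exact pow_mem heK p
    have hπK' : π ∈ K.toSubfield.toIntermediateField hkiK := hπK
    have hle : T ≤ K.toSubfield.toIntermediateField hkiK := by
      rw [hT]
      apply IntermediateField.adjoin_le_iff.2
      exact Set.singleton_subset_iff.2 hπK'
    exact fun y hy => hle hy
  -- M is finite dimensional over T
  haveI hfinT : FiniteDimensional ↥T M := by
    have b0 := Module.finBasis ↥K M
    have hspanK : Submodule.span ↥K (Set.range b0) = ⊤ := b0.span_eq
    have hspanT : Submodule.span ↥T (Set.range b0) = ⊤ := by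
      rw [eq_top_iff]
      intro y _
      have hy : y ∈ Submodule.span ↥K (Set.range b0) := by rw [hspanK]; trivial
      refine Submodule.span_induction ?_ ?_ ?_ ?_ hy
      · exact fun z hz => Submodule.subset_span hz
      · exact Submodule.zero_mem _
      · exact fun a b _ _ ha hb => Submodule.add_mem _ ha hb
      · intro r z _ hz
        have hr : r • z = (⟨(r : M), hKT _ r.2⟩ : ↥T) • z := by
          rw [Algebra.smul_def, Algebra.smul_def]; rfl
        rw [hr]
        exact Submodule.smul_mem _ _ hz
    exact ⟨⟨Finset.univ.image b0, by
      rw [Finset.coe_image, Finset.coe_univ, Set.image_univ]; exact hspanT⟩⟩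
  haveI hfinkiT : FiniteDimensional ↥kI ↥T := IntermediateField.adjoin.finiteDimensional hInt
  haveI hfinki : FiniteDimensional ↥kI M := Module.Finite.trans ↥T M
  -- Mp
  have hkiMp : ∀ c : ↥kI, algebraMap ↥kI M c ∈ φ.fieldRange := by
    intro c
    obtain ⟨e, _, hec⟩ := (hkI_mem (c : M)).1 c.2
    exact RingHom.mem_fieldRange.2 ⟨e, hec⟩
  set Mp : IntermediateField ↥kI M := φ.fieldRange.toIntermediateField hkiMp with hMp
  have hMp_mem : ∀ y : M, y ∈ Mp ↔ ∃ c : M, c ^ p = y := by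
    intro y
    exact RingHom.mem_fieldRange
  haveI hfinMp : FiniteDimensional ↥Mp M := FiniteDimensional.right ↥kI ↥Mp M
  -- transport the degree via Frobenius
  set bT : Module.Basis (Fin (Module.finrank ↥T M)) ↥T M := Module.finBasis ↥T M with hbT
  set cf : Fin (Module.finrank ↥T M) → M := fun i => (bT i) ^ p with hcf
  have hLI : LinearIndependent ↥kI cf := by
    rw [Fintype.linearIndependent_iff]
    intro g hg
    have hgc : ∀ i, ∃ c, c ∈ K ∧ c ^ p = (g i : M) := fun i => (hkI_mem _).1 (g i).2
    choose r hrK hrp using hgc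
    have hsum : (∑ i, r i * bT i) ^ p = 0 := by
      rw [sum_pow_char, ← hg]
      apply Finset.sum_congr rfl
      intro i _
      rw [mul_pow, hrp, Algebra.smul_def]
      rfl
    have hzero : (∑ i, r i * bT i) = 0 := by
      exact pow_eq_zero_iff hp.ne_zero |>.1 hsum
    have hz2 : ∑ i, (fun j => (⟨r j, hKT _ (hrK j)⟩ : ↥T)) i • bT i = 0 := by
      rw [← hzero]
      apply Finset.sum_congr rfl
      intro i _
      rw [Algebra.smul_def]
      rfl
    have hcoef := Fintype.linearIndependent_iff.1 bT.linearIndependent _ hz2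
    intro i
    apply Subtype.ext
    have h1 : (g i : M) = (r i) ^ p := (hrp i).symm
    have h2 : r i = ((⟨r i, hKT _ (hrK i)⟩ : ↥T) : M) := rfl
    rw [h1, h2, hcoef i]
    simp [zero_pow hp.ne_zero]
  have hspan : Submodule.span ↥kI (Set.range cf) = Subalgebra.toSubmodule Mp.toSubalgebra := by
    apply le_antisymm
    · rw [Submodule.span_le]
      rintro _ ⟨i, rfl⟩
      show cf i ∈ Mp
      exact (hMp_mem _).2 ⟨bT i, rfl⟩
    · intro y hy
      have hyMp : y ∈ Mp := hy
      obtain ⟨z, hz⟩ := (hMp_mem y).1 hyMp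
      have hzrepr : ∑ i, bT.repr z i • bT i = z := bT.sum_repr z
      have hyrepr : y = ∑ i, ((bT.repr z i : M) ^ p) * cf i := by
        calc y = z ^ p := hz.symm
          _ = (∑ i, bT.repr z i • bT i) ^ p := by rw [hzrepr]
          _ = ∑ i, (bT.repr z i • bT i) ^ p := sum_pow_char _ _ _
          _ = ∑ i, ((bT.repr z i : M) ^ p) * cf i := by
              apply Finset.sum_congr rfl
              intro i _
              rw [Algebra.smul_def, mul_pow]
              rfl
      rw [hyrepr]
      apply Submodule.sum_mem
      intro i _
      have hmem : ((bT.repr z i : M) ^ p) ∈ kI :=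
        (hkI_mem _).2 ⟨(bT.repr z i : M), hTK _ (bT.repr z i).2, rfl⟩
      have hsm : ((bT.repr z i : M) ^ p) * cf i = (⟨_, hmem⟩ : ↥kI) • cf i := by
        rw [Algebra.smul_def]; rfl
      rw [hsm]
      exact Submodule.smul_mem _ _ (Submodule.subset_span ⟨i, rfl⟩)
  have hMd : Module.finrank ↥kI ↥Mp = Module.finrank ↥T M := by
    have h2 := finrank_span_eq_card hLI
    rw [hspan] at h2
    have h1 : Module.finrank ↥kI ↥(Subalgebra.toSubmodule Mp.toSubalgebra)
        = Module.finrank ↥kI ↥Mp := rfl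
    rw [h1, Fintype.card_fin] at h2
    exact h2
  have hMpd : Module.finrank ↥Mp M = p := by
    have ht1 : Module.finrank ↥kI ↥T * Module.finrank ↥T M = Module.finrank ↥kI M :=
      Module.finrank_mul_finrank _ _ _
    have ht2 : Module.finrank ↥kI ↥Mp * Module.finrank ↥Mp M = Module.finrank ↥kI M :=
      Module.finrank_mul_finrank _ _ _
    have hdpos : 0 < Module.finrank ↥T M := Module.finrank_pos
    apply Nat.eq_of_mul_eq_mul_left hdpos
    calc Module.finrank ↥T M * Module.finrank ↥Mp M
        = Module.finrank ↥kI ↥Mp * Module.finrank ↥Mp M := by rw [hMd]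
      _ = Module.finrank ↥kI M := ht2
      _ = Module.finrank ↥kI ↥T * Module.finrank ↥T M := ht1.symm
      _ = Module.finrank ↥T M * p := by rw [hTd]; ring
  -- final step : M = Mp(π)
  have hπMp : π ^ p ∈ Mp := (hMp_mem _).2 ⟨π, rfl⟩
  set a1 : ↥Mp := ⟨π ^ p, hπMp⟩ with ha1
  have heval1 : Polynomial.aeval π (X ^ p - C a1 : Polynomial ↥Mp) = 0 := by
    rw [map_sub, map_pow, aeval_X, aeval_C]
    have h1 : (algebraMap ↥Mp M) a1 = π ^ p := rfl
    rw [h1, sub_self]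
  have hInt1 : IsIntegral ↥Mp π :=
    ⟨X ^ p - C a1, monic_X_pow_sub_C _ hp.ne_zero, by simpa using heval1⟩
  have hirr1 : Irreducible (X ^ p - C a1 : Polynomial ↥Mp) := by
    apply X_pow_sub_C_irreducible_of_prime hp
    intro b hb
    apply hnp
    have hbv : (b : M) ^ p = π ^ p := by
      have := congrArg (Subtype.val) hb
      simpa using this
    have hbvπ : (b : M) = π := frobenius_inj M p hbv
    obtain ⟨e, he⟩ := (hMp_mem (b : M)).1 b.2
    exact ⟨e, by rw [he, hbvπ]⟩
  have hmin1 : minpoly ↥Mp π = X ^ p - C a1 :=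
    (minpoly.eq_of_irreducible_of_monic hirr1 heval1 (monic_X_pow_sub_C _ hp.ne_zero)).symm
  set U : IntermediateField ↥Mp M := IntermediateField.adjoin ↥Mp {π} with hU
  have hUd : Module.finrank ↥Mp ↥U = p := by
    rw [hU, IntermediateField.adjoin.finrank hInt1, hmin1, natDegree_X_pow_sub_C]
  have hUtop : Subalgebra.toSubmodule U.toSubalgebra = ⊤ := by
    apply Submodule.eq_top_of_finrank_eq
    have h1 : Module.finrank ↥Mp ↥(Subalgebra.toSubmodule U.toSubalgebra)
        = Module.finrank ↥Mp ↥U := rfl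
    rw [h1, hUd, hMpd]
  have hxU : x ∈ U.toSubalgebra := by
    have hx : x ∈ Subalgebra.toSubmodule U.toSubalgebra := by rw [hUtop]; trivial
    exact hx
  have hxadj : x ∈ Algebra.adjoin ↥Mp ({π} : Set M) := by
    rw [← IntermediateField.adjoin_simple_toSubalgebra_of_isAlgebraic hInt1.isAlgebraic]
    exact hxU
  rw [Algebra.adjoin_singleton_eq_range_aeval] at hxadj
  obtain ⟨f, hf0⟩ := hxadj
  have hf : Polynomial.aeval π f = x := hf0
  set g : Polynomial ↥Mp := X ^ p - C a1 with hg
  have hgmonic : Monic g := monic_X_pow_sub_C _ hp.ne_zero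
  have hgne1 : g ≠ 1 := by
    intro h
    have h2 := congrArg natDegree h
    rw [hg, natDegree_X_pow_sub_C, natDegree_one] at h2
    exact hp.ne_zero h2
  have hdeg : (f %ₘ g).natDegree < p := by
    have h3 := natDegree_modByMonic_lt f hgmonic hgne1
    rwa [hg, natDegree_X_pow_sub_C] at h3
  have hxmod : x = Polynomial.aeval π (f %ₘ g) := by
    have hdiv := modByMonic_add_div f g
    calc x = Polynomial.aeval π f := hf.symm
      _ = Polynomial.aeval π (f %ₘ g + g * (f /ₘ g)) := by rw [hdiv]
      _ = Polynomial.aeval π (f %ₘ g) + Polynomial.aeval π g * Polynomial.aeval π (f /ₘ g) := by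
          rw [map_add, map_mul]
      _ = Polynomial.aeval π (f %ₘ g) := by rw [heval1, zero_mul, add_zero]
  have hsum := Polynomial.aeval_eq_sum_range' hdeg π
  rw [hsum] at hxmod
  have hwex : ∀ i : Fin p, ∃ wi : M, wi ^ p = ((f %ₘ g).coeff (i : ℕ) : M) :=
    fun i => (hMp_mem _).1 ((f %ₘ g).coeff (i : ℕ)).2
  choose w hw using hwex
  refine ⟨w, ?_⟩
  rw [hxmod, ← Fin.sum_univ_eq_sum_range]
  apply Finset.sum_congr rfl
  intro i _
  rw [hw i, Algebra.smul_def]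
  rfl


/-- Let `F` be algebraically closed of characteristic `p > 0`, `M` a function field
over `F`, and `t ∈ M` transcendental over `F` and not a `p`-th power in `M`. Let `D`
be the `F`-linear derivation of `M` with `D t = 1`. If `P` is a prime of `M` unramified
over `F(t)` which is not a pole of `t`, then for every `x ∈ M` integral at `P` with
`D x ≠ 0` one has `P.v (D x) ≥ max 0 (P.v x - 1)`. -/
theorem stmt_19 {F M : Type*} [Field F] [Field M] [Algebra F M] [IsAlgClosed F]
    (p : ℕ) (hp : p.Prime) [CharP F p]
    (t : M) (htrans : Transcendental F t)
    (hfin : FiniteDimensional (IntermediateField.adjoin F {t}) M)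
    (hnp : ¬∃ c : M, c ^ p = t)
    (D : M → M)
    (hDadd : ∀ x y : M, D (x + y) = D x + D y)
    (hDlin : ∀ (c : F) (x : M), D (algebraMap F M c * x) = algebraMap F M c * D x)
    (hDmul : ∀ x y : M, D (x * y) = x * D y + y * D x)
    (hDt : D t = 1)
    (P : FFPrime F M) (hunr : P.UnramifiedOver t) (hPt : 0 ≤ P.v t) :
    ∀ x : M, 0 ≤ P.v x → D x ≠ 0 → max 0 (P.v x - 1) ≤ P.v (D x) := by
  intro x hvx hDx
  classical
  haveI : CharP M p := charP_of_injective_algebraMap (algebraMap F M).injective p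
  haveI : Fact p.Prime := ⟨hp⟩
  obtain ⟨α, hα⟩ := P.exists_uniformizer htrans hunr hPt
  set π : M := t - algebraMap F M α with hπdef
  have htπ : t = π + algebraMap F M α := by rw [hπdef]; ring
  have hπtrans : Transcendental F π := by
    have he : Polynomial.aeval t (Polynomial.X - Polynomial.C α) = t - algebraMap F M α := by
      rw [map_sub, Polynomial.aeval_X, Polynomial.aeval_C]
    rw [hπdef, ← he]
    exact htrans.aeval _ (by rw [Polynomial.natDegree_X_sub_C]; norm_num)
      (by rw [(Polynomial.monic_X_sub_C α).leadingCoeff]; exact Submonoid.one_mem _)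
  have hadj : IntermediateField.adjoin F {π} = IntermediateField.adjoin F {t} := by
    apply le_antisymm
    · apply IntermediateField.adjoin_le_iff.2
      intro y hy; rw [Set.mem_singleton_iff] at hy; subst hy
      exact sub_mem (IntermediateField.mem_adjoin_simple_self F t)
        ((IntermediateField.adjoin F {t}).algebraMap_mem α)
    · apply IntermediateField.adjoin_le_iff.2
      intro y hy; rw [Set.mem_singleton_iff] at hy; subst hy
      rw [htπ]
      exact add_mem (IntermediateField.mem_adjoin_simple_self F π)
        ((IntermediateField.adjoin F {π}).algebraMap_mem α)
  haveI hfinπ : FiniteDimensional (IntermediateField.adjoin F {π}) M := hadj ▸ hfin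
  have hnpπ : ¬∃ c : M, c ^ p = π := by
    rintro ⟨c, hc⟩
    obtain ⟨b, hb⟩ := IsAlgClosed.exists_pow_nat_eq α hp.pos
    apply hnp
    refine ⟨c + algebraMap F M b, ?_⟩
    rw [add_pow_char, hc, ← map_pow, hb, htπ]
  have hDc : ∀ c : F, D (algebraMap F M c) = 0 := fun c => D_const hDlin hDmul c
  have hDπ : D π = 1 := by
    have h1 : π = t + algebraMap F M (-α) := by rw [hπdef, map_neg]; ring
    rw [h1, hDadd, hDt, hDc, add_zero]
  have hx0 : x ≠ 0 := by
    intro h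
    apply hDx
    rw [h]
    exact D_zero hDadd
  have hπ0 : π ≠ 0 := fun h => hπtrans (h ▸ isAlgebraic_zero)
  have hvπ : P.v π = 1 := hα
  obtain ⟨w, hxw⟩ := dec p hp π hπtrans hfinπ hnpπ x
  set T : Fin p → M := fun i => w i ^ p * π ^ (i : ℕ) with hTdef
  set S : Finset (Fin p) := Finset.univ.filter (fun i => w i ≠ 0) with hS
  have hwS : ∀ i ∈ S, w i ≠ 0 := fun i hi => (Finset.mem_filter.1 hi).2
  have hxS : x = ∑ i ∈ S, T i := by
    rw [hxw]
    symm
    apply Finset.sum_filter_of_ne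
    intro i _ hne0 hw0
    apply hne0
    show w i ^ p * π ^ (i:ℕ) = 0
    rw [hw0, zero_pow hp.ne_zero, zero_mul]
  have hTne : ∀ i ∈ S, T i ≠ 0 := fun i hi =>
    mul_ne_zero (pow_ne_zero _ (hwS i hi)) (pow_ne_zero _ hπ0)
  have hvT : ∀ i ∈ S, P.v (T i) = p * P.v (w i) + (i : ℕ) := by
    intro i hi
    show P.v (w i ^ p * π ^ (i:ℕ)) = _
    rw [P.map_mul _ _ (pow_ne_zero _ (hwS i hi)) (pow_ne_zero _ hπ0),
      P.v_pow (hwS i hi), P.v_pow hπ0, hvπ, mul_one]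
  have hdistinct : ∀ i ∈ S, ∀ j ∈ S, P.v (T i) = P.v (T j) → i = j := by
    intro i hi j hj h
    rw [hvT i hi, hvT j hj] at h
    have hk : ((i:ℕ):ℤ) - ((j:ℕ):ℤ) = p * (P.v (w j) - P.v (w i)) := by
      linear_combination h
    have hdvd : (p:ℤ) ∣ ((i:ℕ):ℤ) - ((j:ℕ):ℤ) := ⟨_, hk⟩
    have hip : ((i:ℕ):ℤ) < p := by exact_mod_cast i.isLt
    have hjp : ((j:ℕ):ℤ) < p := by exact_mod_cast j.isLt
    have hi0 : (0:ℤ) ≤ ((i:ℕ):ℤ) := by positivity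
    have hj0 : (0:ℤ) ≤ ((j:ℕ):ℤ) := by positivity
    have habs : |((i:ℕ):ℤ) - ((j:ℕ):ℤ)| < p := by
      rw [abs_lt]; constructor <;> linarith
    have hz := Int.eq_zero_of_abs_lt_dvd hdvd habs
    have hij : ((i:ℕ):ℤ) = ((j:ℕ):ℤ) := by linarith
    exact Fin.ext (by exact_mod_cast hij)
  have hSne : S.Nonempty := by
    rcases Finset.eq_empty_or_nonempty S with h | h
    · exfalso; apply hx0; rw [hxS, h, Finset.sum_empty]
    · exact h
  obtain ⟨hxne', i0, hi0S, hvx_eq, hvmin⟩ := P.v_sum S T hTne hdistinct hSne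
  rw [← hxS] at hvx_eq
  have hkey : ∀ i ∈ S, P.v x ≤ p * P.v (w i) + (i : ℕ) := by
    intro i hi
    rw [← hvT i hi, hvx_eq]
    exact hvmin i hi
  have hkey0 : ∀ i ∈ S, 0 ≤ p * P.v (w i) + (i : ℕ) := fun i hi =>
    le_trans hvx (hkey i hi)
  have hw0 : ∀ i ∈ S, 0 ≤ P.v (w i) := by
    intro i hi
    by_contra hneg
    push_neg at hneg
    have h1 := hkey0 i hi
    have hip : ((i:ℕ):ℤ) < p := by exact_mod_cast i.isLt
    have h2 : P.v (w i) ≤ -1 := by linarith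
    have h3 : (p:ℤ) * P.v (w i) ≤ (p:ℤ) * (-1) :=
      mul_le_mul_of_nonneg_left h2 (by positivity)
    linarith
  -- the derivative
  have hDsum : D x = ∑ i : Fin p, ((i:ℕ) : M) * (π ^ ((i:ℕ) - 1) * w i ^ p) := by
    rw [hxw, D_sum hDadd]
    apply Finset.sum_congr rfl
    intro i _
    rw [hDmul, D_pow hDmul (w i) p,
      show ((p:ℕ):M) = 0 from CharP.cast_eq_zero M p,
      D_pow hDmul π (i:ℕ), hDπ]
    ring
  set T' : Fin p → M := fun i => ((i:ℕ) : M) * (π ^ ((i:ℕ) - 1) * w i ^ p) with hT'def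
  set S' : Finset (Fin p) := Finset.univ.filter (fun i => w i ≠ 0 ∧ (i:ℕ) ≠ 0) with hS'def
  have hDxS : D x = ∑ i ∈ S', T' i := by
    rw [hDsum]
    symm
    apply Finset.sum_filter_of_ne
    intro i _ hne0
    constructor
    · intro hwi
      apply hne0
      show ((i:ℕ) : M) * (π ^ ((i:ℕ) - 1) * w i ^ p) = 0
      rw [hwi, zero_pow hp.ne_zero, mul_zero, mul_zero]
    · intro hi0
      apply hne0
      show ((i:ℕ) : M) * (π ^ ((i:ℕ) - 1) * w i ^ p) = 0
      rw [hi0, Nat.cast_zero, zero_mul]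
  have hS'S : ∀ i ∈ S', i ∈ S := by
    intro i hi
    have := (Finset.mem_filter.1 hi).2.1
    exact Finset.mem_filter.2 ⟨Finset.mem_univ i, this⟩
  have hiM : ∀ i ∈ S', ((i:ℕ):M) ≠ 0 := by
    intro i hi
    have hi0 := (Finset.mem_filter.1 hi).2.2
    rw [Ne, CharP.cast_eq_zero_iff M p]
    exact Nat.not_dvd_of_pos_of_lt (Nat.pos_of_ne_zero hi0) i.isLt
  have hT'ne : ∀ i ∈ S', T' i ≠ 0 := fun i hi =>
    mul_ne_zero (hiM i hi)
      (mul_ne_zero (pow_ne_zero _ hπ0) (pow_ne_zero _ (hwS i (hS'S i hi))))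
  have hviM : ∀ i ∈ S', P.v ((i:ℕ):M) = 0 := by
    intro i hi
    have hi0 := (Finset.mem_filter.1 hi).2.2
    have hiF : ((i:ℕ):F) ≠ 0 := by
      rw [Ne, CharP.cast_eq_zero_iff F p]
      exact Nat.not_dvd_of_pos_of_lt (Nat.pos_of_ne_zero hi0) i.isLt
    have h1 : (((i:ℕ):M)) = algebraMap F M ((i:ℕ):F) := by rw [map_natCast]
    rw [h1]
    exact P.triv _ hiF
  have hvT' : ∀ i ∈ S', P.v (T' i) = (((i:ℕ) - 1 : ℕ) : ℤ) + p * P.v (w i) := by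
    intro i hi
    show P.v (((i:ℕ):M) * (π ^ ((i:ℕ)-1) * w i ^ p)) = _
    rw [P.map_mul _ _ (hiM i hi)
        (mul_ne_zero (pow_ne_zero _ hπ0) (pow_ne_zero _ (hwS i (hS'S i hi)))),
      hviM i hi,
      P.map_mul _ _ (pow_ne_zero _ hπ0) (pow_ne_zero _ (hwS i (hS'S i hi))),
      P.v_pow hπ0, P.v_pow (hwS i (hS'S i hi)), hvπ, mul_one, zero_add]
  have hdist' : ∀ i ∈ S', ∀ j ∈ S', P.v (T' i) = P.v (T' j) → i = j := by
    intro i hi j hj h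
    rw [hvT' i hi, hvT' j hj] at h
    have hi1 : 1 ≤ (i:ℕ) := Nat.pos_of_ne_zero (Finset.mem_filter.1 hi).2.2
    have hj1 : 1 ≤ (j:ℕ) := Nat.pos_of_ne_zero (Finset.mem_filter.1 hj).2.2
    have hci : (((i:ℕ) - 1 : ℕ) : ℤ) = ((i:ℕ):ℤ) - 1 := by omega
    have hcj : (((j:ℕ) - 1 : ℕ) : ℤ) = ((j:ℕ):ℤ) - 1 := by omega
    rw [hci, hcj] at h
    have hk : ((i:ℕ):ℤ) - ((j:ℕ):ℤ) = p * (P.v (w j) - P.v (w i)) := by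
      linear_combination h
    have hdvd : (p:ℤ) ∣ ((i:ℕ):ℤ) - ((j:ℕ):ℤ) := ⟨_, hk⟩
    have hip : ((i:ℕ):ℤ) < p := by exact_mod_cast i.isLt
    have hjp : ((j:ℕ):ℤ) < p := by exact_mod_cast j.isLt
    have hi0' : (0:ℤ) ≤ ((i:ℕ):ℤ) := by positivity
    have hj0' : (0:ℤ) ≤ ((j:ℕ):ℤ) := by positivity
    have habs : |((i:ℕ):ℤ) - ((j:ℕ):ℤ)| < p := by
      rw [abs_lt]; constructor <;> linarith
    have hz := Int.eq_zero_of_abs_lt_dvd hdvd habs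
    have hij : ((i:ℕ):ℤ) = ((j:ℕ):ℤ) := by linarith
    exact Fin.ext (by exact_mod_cast hij)
  have hS'ne : S'.Nonempty := by
    rcases Finset.eq_empty_or_nonempty S' with h | h
    · exfalso; apply hDx; rw [hDxS, h, Finset.sum_empty]
    · exact h
  obtain ⟨hDne', j0, hj0, hvD_eq, hvD_min⟩ := P.v_sum S' T' hT'ne hdist' hS'ne
  rw [← hDxS] at hvD_eq
  have hj0S := hS'S j0 hj0
  have hj1 : 1 ≤ (j0:ℕ) := Nat.pos_of_ne_zero (Finset.mem_filter.1 hj0).2.2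
  have hcj0 : (((j0:ℕ) - 1 : ℕ) : ℤ) = ((j0:ℕ):ℤ) - 1 := by omega
  rw [hvD_eq, hvT' j0 hj0, hcj0]
  apply max_le
  · have h1 := hw0 j0 hj0S
    have h2 : (0:ℤ) ≤ (p:ℤ) * P.v (w j0) := mul_nonneg (by positivity) h1
    have h3 : (1:ℤ) ≤ ((j0:ℕ):ℤ) := by exact_mod_cast hj1
    linarith
  · have h1 := hkey j0 hj0S
    linarith
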